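/- PT-entailment satisfies the following: (i) Inclusion: for every K ⊆ L•, K ⊆ Cn_PT(K); (ii) Cumulativity: for all K, K' ⊆ L•, if K ⊆ K' ⊆ Cn_PT(K), then Cn_PT(K') = Cn_PT(K); (iii) Ampliativeness: for every K ⊆ L•, Cn0(K) ⊆ Cn_PT(K). -/

import Mathlib

attribute [local instance] Classical.propDecidable

universe u

/-- Sentences of Propositional Typicality Logic over atoms `P`. -/
inductive PTL (P : Type u) : Type u
  | atom : P → PTL P
  | neg  : PTL P → PTL P
  | conj : PTL P → PTL P → PTL P
  | top  : PTL P
  | bot  : PTL P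
  | typ  : PTL P → PTL P

namespace PTL

/-- Material implication, defined from `¬` and `∧`. -/
def impl {P : Type u} (a b : PTL P) : PTL P := neg (conj a (neg b))

/-- Disjunction, defined from `¬` and `∧`. -/
def disj {P : Type u} (a b : PTL P) : PTL P := neg (conj (neg a) (neg b))

/-- Purely propositional sentences: no occurrence of the typicality operator. -/
def IsProp {P : Type u} : PTL P → Prop
  | atom _ => True
  | neg a => IsProp a
  | conj a b => IsProp a ∧ IsProp b
  | top => True
  | bot => True
  | typ _ => False

end PTL

/-- Propositional valuations. -/
abbrev Val (P : Type u) := P → Bool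

/-- Satisfaction of a PTL sentence by a valuation, relative to a ranking
function `rho : Val P → ℕ∞`. -/
def satR {P : Type u} (rho : Val P → ℕ∞) : Val P → PTL P → Prop
  | v, PTL.atom p => v p = true
  | v, PTL.neg a => ¬ satR rho v a
  | v, PTL.conj a b => satR rho v a ∧ satR rho v b
  | _, PTL.top => True
  | _, PTL.bot => False
  | v, PTL.typ a => satR rho v a ∧ ∀ v', rho v' < rho v → ¬ satR rho v' a

/-- The convexity property of ranking functions. -/
def RkConvex {P : Type u} (rho : Val P → ℕ∞) : Prop :=
  ∀ (v : Val P) (i : ℕ), rho v = (i : ℕ∞) → ∀ j : ℕ, j < i → ∃ v', rho v' = (j : ℕ∞)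

/-- A ranked interpretation: a convex ranking function on valuations. -/
structure RankedInterp (P : Type u) where
  rk : Val P → ℕ∞
  convex : RkConvex rk

/-- `rho` is a ranked model of `a`: every possible valuation satisfies `a`. -/
def modelsR {P : Type u} (rho : Val P → ℕ∞) (a : PTL P) : Prop :=
  ∀ v, rho v < ⊤ → satR rho v a

/-- `R ⊨ a`. -/
def RankedInterp.models {P : Type u} (R : RankedInterp P) (a : PTL P) : Prop :=
  modelsR R.rk a

/-- `R` is a ranked model of the knowledge base `K`. -/
def modelsSet {P : Type u} (R : RankedInterp P) (K : Set (PTL P)) : Prop :=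
  ∀ a ∈ K, R.models a

/-- Ranked entailment consequences of `K`. -/
def Cn0 {P : Type u} (K : Set (PTL P)) : Set (PTL P) :=
  {a | ∀ R : RankedInterp P, modelsSet R K → R.models a}

/-- The PT preference `⪯_PT` on ranking functions: pointwise comparison. -/
def PTle {P : Type u} (rho1 rho2 : Val P → ℕ∞) : Prop :=
  ∀ w, rho1 w ≤ rho2 w

/-- Strict PT preference. -/
def PTlt {P : Type u} (rho1 rho2 : Val P → ℕ∞) : Prop :=
  PTle rho1 rho2 ∧ ¬ PTle rho2 rho1

/-- `Mod(K)`: the set of ranked models of `K`. -/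
def ModSet {P : Type u} (K : Set (PTL P)) : Set (RankedInterp P) :=
  {R | modelsSet R K}

/-- The PT-minimal ranked models of `K`. -/
def minPT {P : Type u} (K : Set (PTL P)) : Set (RankedInterp P) :=
  {R ∈ ModSet K | ¬ ∃ R' ∈ ModSet K, PTlt R'.rk R.rk}

/-- PT-entailment consequences of `K`. -/
def CnPT {P : Type u} (K : Set (PTL P)) : Set (PTL P) :=
  {a | ∀ R ∈ minPT K, R.models a}


lemma PTlt_iff_lt {P : Type u} (r1 r2 : Val P → ℕ∞) : PTlt r1 r2 ↔ r1 < r2 := by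
  rw [lt_iff_le_not_ge]
  exact Iff.rfl

lemma minPT_eq {P : Type u} [Fintype P] [DecidableEq P] (K K' : Set (PTL P))
    (h1 : K ⊆ K') (h2 : K' ⊆ CnPT K) : minPT K' = minPT K := by
  have hmod : ModSet K' ⊆ ModSet K := fun R hR a ha => hR a (h1 ha)
  have hmin : minPT K ⊆ ModSet K' := by
    intro R hR a ha
    exact h2 ha R hR
  ext R
  constructor
  · rintro ⟨hR, hnot⟩
    refine ⟨hmod hR, fun ⟨R2, hR2, hlt⟩ => ?_⟩
    -- find a minimal model of K below R
    have hwf : WellFounded ((· < ·) : (Val P → ℕ∞) → (Val P → ℕ∞) → Prop) :=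
      IsWellFounded.wf
    set S : Set (Val P → ℕ∞) := {ρ | ∃ R3 ∈ ModSet K, R3.rk = ρ ∧ ρ < R.rk} with hS
    have hne : S.Nonempty := ⟨R2.rk, R2, hR2, rfl, (PTlt_iff_lt _ _).1 hlt⟩
    obtain ⟨R3, hR3, hR3eq, hR3lt⟩ := hwf.min_mem S hne
    have hR3min : R3 ∈ minPT K := by
      refine ⟨hR3, fun ⟨R4, hR4, hlt4⟩ => ?_⟩
      have h4 : R4.rk < R3.rk := (PTlt_iff_lt _ _).1 hlt4
      rw [hR3eq] at h4
      exact hwf.not_lt_min S ⟨R4, hR4, rfl, h4.trans hR3lt⟩ h4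
    exact hnot ⟨R3, hmin hR3min, (PTlt_iff_lt _ _).2 (hR3eq ▸ hR3lt)⟩
  · rintro ⟨hR, hnot⟩
    refine ⟨hmin ⟨hR, hnot⟩, fun ⟨R2, hR2, hlt⟩ => ?_⟩
    exact hnot ⟨R2, hmod hR2, hlt⟩

/-- PT-entailment satisfies Inclusion, Cumulativity and
Ampliativeness. -/
theorem ptl_CnPT_basic_properties {P : Type u} [Fintype P] [DecidableEq P] :
    (∀ K : Set (PTL P), K ⊆ CnPT K) ∧
    (∀ K K' : Set (PTL P), K ⊆ K' → K' ⊆ CnPT K → CnPT K' = CnPT K) ∧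
    (∀ K : Set (PTL P), Cn0 K ⊆ CnPT K) := by
  refine ⟨?_, ?_, ?_⟩
  · intro K a ha R hR
    exact hR.1 a ha
  · intro K K' h1 h2
    unfold CnPT
    rw [minPT_eq K K' h1 h2]
  · intro K a ha R hR
    exact ha R hR.1
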